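/- arXiv:1506.02331 — 4 statements merged into one kernel-verified Lean document; each statement's English description precedes it below -/
import Mathlib

section
/- Let G be a finite abelian group. The set of indicator functions {𝟙_K : K is a subgroup of G such that K^⊥ is a cyclic subgroup of Ĝ} is linearly independent in the complex vector space L²(G) of functions G → ℂ. -/
/-- For a subgroup `K` of a finite abelian group `G`, the subgroup
`K^⊥ = {χ ∈ Ĝ : χ k = 1 for all k ∈ K}` of the character group `Ĝ = Hom(G, ℂˣ)`. -/
def Kperp {G : Type*} [CommGroup G] (K : Subgroup G) : Subgroup (G →* ℂˣ) where
  carrier := {χ | ∀ k ∈ K, χ k = 1}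
  one_mem' := by intro k _; simp
  mul_mem' := by
    intro χ ψ hχ hψ k hk
    simp [hχ k hk, hψ k hk]
  inv_mem' := by
    intro χ hχ k hk
    simp [hχ k hk]


open scoped Classical

section Aux
variable {G : Type*} [CommGroup G] [Fintype G]

lemma Kperp_mem {K : Subgroup G} {χ : G →* ℂˣ} : χ ∈ Kperp K ↔ ∀ k ∈ K, χ k = 1 := Iff.rfl

lemma Kperp_anti {K N : Subgroup G} (h : K ≤ N) : Kperp N ≤ Kperp K :=
  fun χ hχ k hk => hχ k (h hk)

lemma le_of_Kperp_le {K N : Subgroup G} (h : Kperp N ≤ Kperp K) : K ≤ N := by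
  intro g hg
  by_contra hgN
  have h1 : (QuotientGroup.mk g : G ⧸ N) ≠ 1 := by
    simpa [QuotientGroup.eq_one_iff] using hgN
  have : NeZero (Monoid.exponent (G ⧸ N)) := ⟨Monoid.exponent_ne_zero_of_finite⟩
  obtain ⟨φ', hφ'⟩ := CommGroup.exists_apply_ne_one_of_hasEnoughRootsOfUnity (G ⧸ N) ℂ h1
  have hmem : φ'.comp (QuotientGroup.mk' N) ∈ Kperp N := by
    intro k hk
    show φ' (QuotientGroup.mk k) = 1
    rw [(QuotientGroup.eq_one_iff k).mpr hk, map_one]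
  have := h hmem g hg
  simp only [MonoidHom.comp_apply, QuotientGroup.mk'_apply] at this
  exact hφ' this

lemma sum_char_eq_zero {H : Type*} [CommGroup H] [Fintype H] (φ : H →* ℂˣ)
    (h : ∃ x, φ x ≠ 1) : ∑ x, (φ x : ℂ) = 0 := by
  obtain ⟨x, hx⟩ := h
  have key : (φ x : ℂ) * ∑ y, (φ y : ℂ) = ∑ y, (φ y : ℂ) := by
    rw [Finset.mul_sum]
    exact Fintype.sum_equiv (Equiv.mulLeft x) _ _ (fun y => by
      simp [map_mul])
  have hx' : (φ x : ℂ) ≠ 1 := fun h => hx (Units.ext (by rw [h, Units.val_one]))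
  have := sub_eq_zero.mpr key
  rw [← sub_one_mul] at this
  rcases mul_eq_zero.mp this with h' | h'
  · exact absurd (sub_eq_zero.mp h') hx'
  · exact h'

lemma indicator_char_sum (K : Subgroup G) (χ : G →* ℂˣ) :
    ∑ g : G, (if g ∈ K then (1 : ℂ) else 0) * (χ g : ℂ) =
      if χ ∈ Kperp K then (Fintype.card K : ℂ) else 0 := by
  have h1 : ∑ g : G, (if g ∈ K then (1 : ℂ) else 0) * (χ g : ℂ)
      = ∑ x : K, (χ x : ℂ) := by
    simp only [ite_mul, one_mul, zero_mul]
    rw [← Finset.sum_filter, ← Finset.sum_subtype (Finset.univ.filter (· ∈ K))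
      (fun x => by simp) (fun x => (χ x : ℂ))]
  rw [h1]
  split_ifs with h
  · rw [Finset.sum_congr rfl (fun x _ => by rw [h x.1 x.2, Units.val_one])]
    simp
  · refine sum_char_eq_zero (χ.comp K.subtype) ?_
    simp only [Kperp_mem] at h
    push_neg at h
    obtain ⟨k, hk, hk1⟩ := h
    exact ⟨⟨k, hk⟩, by simpa using hk1⟩

end Aux
open scoped Classical in
/-- Lemma 4 (`prop:01matrixinvertible`).  Let `G` be a finite abelian group.  The
indicator functions `𝟙_K`, over subgroups `K ≤ G` such that `K^⊥` is a cyclic subgroup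
of `Ĝ`, are linearly independent in `L²(G)`. -/
theorem indicator_cyclic_perp_linearIndependent (G : Type*) [CommGroup G] [Fintype G] :
    LinearIndependent ℂ
      (fun K : {K : Subgroup G // IsCyclic ↥(Kperp K)} =>
        (fun g : G => if g ∈ (K : Subgroup G) then (1 : ℂ) else 0)) := by
  rw [linearIndependent_iff']
  intro s c hsum
  have hg : ∀ g : G, ∑ i ∈ s, c i * (if g ∈ (i : Subgroup G) then (1 : ℂ) else 0) = 0 := by
    intro g
    have := congrFun hsum g
    simpa [Finset.sum_apply] using this
  haveI : Finite (Subgroup G) :=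
    Finite.of_injective (fun K : Subgroup G => (K : Set G)) SetLike.coe_injective
  suffices H : ∀ N : Subgroup G, ∀ K : {K : Subgroup G // IsCyclic ↥(Kperp K)},
      K ∈ s → (K : Subgroup G) = N → c K = 0 by
    intro K hK; exact H K.1 K hK rfl
  intro N
  induction N using WellFoundedLT.induction with
  | _ N IH =>
  intro K hKs hKN
  subst hKN
  obtain ⟨χ₀, hχ₀⟩ := K.2.exists_generator
  set χ : G →* ℂˣ := (χ₀ : G →* ℂˣ) with hχdef
  have hχmem : χ ∈ Kperp (K : Subgroup G) := χ₀.2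
  have hiff : ∀ i : {K : Subgroup G // IsCyclic ↥(Kperp K)},
      χ ∈ Kperp (i : Subgroup G) ↔ (i : Subgroup G) ≤ (K : Subgroup G) := by
    intro i
    constructor
    · intro hχi
      apply le_of_Kperp_le
      intro ψ hψ
      obtain ⟨n, hn⟩ := Subgroup.mem_zpowers_iff.mp (hχ₀ ⟨ψ, hψ⟩)
      have hψχ : ψ = χ ^ n := by
        have := congrArg Subtype.val hn
        simpa [hχdef] using this.symm
      rw [hψχ]
      exact Subgroup.zpow_mem _ hχi n
    · intro hle
      exact Kperp_anti hle hχmem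
  have h2 : ∑ i ∈ s, c i *
      (if χ ∈ Kperp (i : Subgroup G) then (Fintype.card (i : Subgroup G) : ℂ) else 0) = 0 := by
    have e1 : ∀ i ∈ s, c i *
        (if χ ∈ Kperp (i : Subgroup G) then (Fintype.card (i : Subgroup G) : ℂ) else 0)
        = ∑ g : G, c i * ((if g ∈ (i : Subgroup G) then (1 : ℂ) else 0) * (χ g : ℂ)) := by
      intro i _
      rw [← Finset.mul_sum, indicator_char_sum]
    rw [Finset.sum_congr rfl e1, Finset.sum_comm]
    refine Finset.sum_eq_zero fun g _ => ?_
    simp_rw [← mul_assoc, ← Finset.sum_mul, hg g, zero_mul]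
  rw [Finset.sum_eq_single_of_mem K hKs (fun i hi hne => ?_)] at h2
  · rw [if_pos hχmem] at h2
    have hcard : (Fintype.card (K : Subgroup G) : ℂ) ≠ 0 := by
      exact_mod_cast Fintype.card_ne_zero
    exact (mul_eq_zero.mp h2).resolve_right hcard
  · by_cases hχi : χ ∈ Kperp (i : Subgroup G)
    · have hlt : (i : Subgroup G) < (K : Subgroup G) :=
        lt_of_le_of_ne ((hiff i).mp hχi) (fun h => hne (Subtype.ext h))
      rw [IH _ hlt i hi rfl, zero_mul]
    · rw [if_neg hχi, mul_zero]
end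

section
/- Let q ∈ ℕ^m. Then there exists a linear ordering a^(1) < a^(2) < ⋯ < a^(N) of all tuples in ℕ^m dividing q (componentwise) such that: (1) for all i < j, a^(j) does not divide a^(i); and (2) for all i = 1,…,N, a^(i)·a^(N−i+1) = q (componentwise product). -/
lemma div_lt_div_of_dvd_of_lt {n a b : ℕ} (hn : 0 < n) (ha : a ∣ n) (hb : b ∣ n) (hab : a < b) :
    n / b < n / a := by
  have ha0 : 0 < a := Nat.pos_of_dvd_of_pos ha hn
  have hna : 0 < n / a := Nat.div_pos (Nat.le_of_dvd hn ha) ha0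
  by_contra h
  push_neg at h
  have k1 : n / a * a = n := Nat.div_mul_cancel ha
  have k2 : n / b * b = n := Nat.div_mul_cancel hb
  nlinarith

lemma one_dim (n : ℕ) (hn : 0 < n) :
    ∃ (d : ℕ) (f : Fin d → ℕ), StrictMono f ∧ (∀ x, x ∣ n ↔ ∃ u, f u = x) ∧
      (∀ u : Fin d, f u * f u.rev = n) := by
  classical
  set s := n.divisors with hs
  refine ⟨s.card, fun u => (s.orderIsoOfFin rfl u : ℕ), ?_, ?_, ?_⟩
  · intro u v huv
    exact (s.orderIsoOfFin rfl).strictMono huv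
  · intro x
    constructor
    · intro hx
      have hx' : x ∈ s := Nat.mem_divisors.mpr ⟨hx, hn.ne'⟩
      exact ⟨(s.orderIsoOfFin rfl).symm ⟨x, hx'⟩, by simp⟩
    · rintro ⟨u, rfl⟩
      exact (Nat.mem_divisors.mp (s.orderIsoOfFin rfl u).2).1
  · -- complement
    set e := s.orderIsoOfFin rfl with he
    have hmem : ∀ u : Fin s.card, (n / (e u : ℕ)) ∈ s := by
      intro u
      have := (Nat.mem_divisors.mp (e u).2).1
      exact Nat.mem_divisors.mpr ⟨Nat.div_dvd_of_dvd this, hn.ne'⟩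
    set φ : Fin s.card → Fin s.card := fun u => e.symm ⟨n / (e u : ℕ), hmem u⟩ with hφ
    have hanti : StrictAnti φ := by
      intro u v huv
      have h1 : (e u : ℕ) < e v := e.strictMono huv
      have := div_lt_div_of_dvd_of_lt hn (Nat.mem_divisors.mp (e u).2).1
        (Nat.mem_divisors.mp (e v).2).1 h1
      have : (⟨n / (e v : ℕ), hmem v⟩ : s) < ⟨n / (e u : ℕ), hmem u⟩ := this
      simpa [hφ] using e.symm.strictMono this
    have hψ : StrictMono (φ ∘ Fin.rev) := by
      intro u v huv
      exact hanti (Fin.rev_lt_rev.mpr huv)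
    have hinj : Function.Injective (φ ∘ Fin.rev) := hψ.injective
    have hsurj : Function.Surjective (φ ∘ Fin.rev) := Finite.surjective_of_injective hinj
    have hid : ∀ u, (φ ∘ Fin.rev) u = u := by
      have : hψ.orderIsoOfSurjective _ hsurj = OrderIso.refl (Fin s.card) :=
        Subsingleton.elim _ _
      intro u
      have := congrArg (fun (g : Fin s.card ≃o Fin s.card) => g u) this
      simpa [StrictMono.coe_orderIsoOfSurjective] using this
    intro u
    have h1 : φ u = u.rev := by
      have := hid u.rev
      simpa using this
    have h2 : (e u.rev : ℕ) = n / (e u : ℕ) := by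
      rw [← h1, hφ]
      simp
    show (e u : ℕ) * (e u.rev : ℕ) = n
    rw [h2]
    exact Nat.mul_div_cancel' (Nat.mem_divisors.mp (e u).2).1


lemma decomp_div {N x y : ℕ} (hN : 0 < N) (hy : y < N) : (y + x * N) / N = x := by
  rw [Nat.add_mul_div_right _ _ hN, Nat.div_eq_of_lt hy, Nat.zero_add]

lemma decomp_mod {N x y : ℕ} (hy : y < N) : (y + x * N) % N = y := by
  rw [Nat.add_mul_mod_self_right, Nat.mod_eq_of_lt hy]

lemma rev_decomp {d N : ℕ} (p q : ℕ) (hp : p < d) (hq : q < N) :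
    d * N - (q + p * N + 1) = (N - 1 - q) + (d - 1 - p) * N := by
  obtain ⟨p', rfl⟩ : ∃ p', d = p + p' + 1 := ⟨d - p - 1, by omega⟩
  obtain ⟨q', rfl⟩ : ∃ q', N = q + q' + 1 := ⟨N - q - 1, by omega⟩
  have h1 : p + p' + 1 - 1 - p = p' := by omega
  have h2 : q + q' + 1 - 1 - q = q' := by omega
  rw [h1, h2]
  apply Nat.sub_eq_of_eq_add
  ring


lemma aux_ordering : ∀ (m : ℕ) (q : Fin m → ℕ), (∀ i, 0 < q i) →
    ∃ (N : ℕ) (a : Fin N → (Fin m → ℕ)),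
      Function.Injective a ∧
      (∀ b : Fin m → ℕ, (∀ i, b i ∣ q i) ↔ ∃ k : Fin N, a k = b) ∧
      (∀ k l : Fin N, k < l → ¬ ∀ i, a l i ∣ a k i) ∧
      (∀ k : Fin N, ∀ i, a k i * a k.rev i = q i) := by
  intro m
  induction m with
  | zero =>
    intro q hq
    refine ⟨1, fun _ => Fin.elim0, fun x y _ => Subsingleton.elim x y, ?_, ?_, ?_⟩
    · intro b
      constructor
      · intro _; exact ⟨0, funext fun i => i.elim0⟩
      · intro _ i; exact i.elim0
    · intro k l hkl _
      have hk := k.isLt; have hl := l.isLt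
      rw [Fin.lt_def] at hkl; omega
    · intro k i; exact i.elim0
  | succ m ih =>
    intro q hq
    obtain ⟨N, a, hainj, haiff, haord, harev⟩ := ih (fun i => q i.succ) (fun i => hq i.succ)
    obtain ⟨d, f, hfmono, hfiff, hfrev⟩ := one_dim (q 0) (hq 0)
    have hN : 0 < N := by
      obtain ⟨k, _⟩ := (haiff fun i => q i.succ).mp (fun i => dvd_rfl)
      exact k.pos
    have hd : 0 < d := by
      obtain ⟨u, _⟩ := (hfiff (q 0)).mp dvd_rfl
      exact u.pos
    have hfpos : ∀ v, 0 < f v := fun v =>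
      Nat.pos_of_dvd_of_pos ((hfiff (f v)).mpr ⟨v, rfl⟩) (hq 0)
    -- index decomposition
    set U : Fin (d * N) → Fin d := fun k => ⟨(k : ℕ) / N, (Nat.div_lt_iff_lt_mul hN).mpr k.isLt⟩
      with hU
    set R : Fin (d * N) → Fin N := fun k => ⟨(k : ℕ) % N, Nat.mod_lt _ hN⟩ with hR
    have hUR : ∀ k : Fin (d * N), (k : ℕ) = (R k : ℕ) + (U k : ℕ) * N := by
      intro k
      show (k : ℕ) = (k : ℕ) % N + (k : ℕ) / N * N
      exact (Nat.mod_add_div' (k : ℕ) N).symm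
    have hUrev : ∀ k : Fin (d * N), U k.rev = (U k).rev := by
      intro k
      have h1 : ((U k : ℕ)) < d := (U k).isLt
      have h2 : ((R k : ℕ)) < N := (R k).isLt
      apply Fin.ext
      show ((k.rev : ℕ)) / N = _
      rw [Fin.val_rev, Fin.val_rev]
      rw [show (k : ℕ) + 1 = (R k : ℕ) + (U k : ℕ) * N + 1 by rw [← hUR]]
      rw [rev_decomp _ _ h1 h2, decomp_div hN (by omega)]
      omega
    have hRrev : ∀ k : Fin (d * N), R k.rev = (R k).rev := by
      intro k
      have h1 : ((U k : ℕ)) < d := (U k).isLt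
      have h2 : ((R k : ℕ)) < N := (R k).isLt
      apply Fin.ext
      show ((k.rev : ℕ)) % N = _
      rw [Fin.val_rev, Fin.val_rev]
      rw [show (k : ℕ) + 1 = (R k : ℕ) + (U k : ℕ) * N + 1 by rw [← hUR]]
      rw [rev_decomp _ _ h1 h2, decomp_mod (by omega)]
      omega
    refine ⟨d * N, fun k => Fin.cons (f (U k)) (a (R k)), ?_, ?_, ?_, ?_⟩
    · -- injective
      intro k k' h
      have h0 : f (U k) = f (U k') := by
        have := congrFun h 0
        simpa using this
      have ht : a (R k) = a (R k') := by
        funext j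
        have := congrFun h j.succ
        simpa using this
      have hU' : U k = U k' := hfmono.injective h0
      have hR' : R k = R k' := hainj ht
      apply Fin.ext
      rw [hUR k, hUR k', hU', hR']
    · -- characterization
      intro b
      constructor
      · intro hb
        obtain ⟨u, hu⟩ := (hfiff (b 0)).mp (hb 0)
        obtain ⟨v, hv⟩ := (haiff (fun j => b j.succ)).mp (fun j => hb j.succ)
        have hk : (v : ℕ) + (u : ℕ) * N < d * N := by
          have h1 : (u : ℕ) + 1 ≤ d := u.isLt
          have h2 : (v : ℕ) < N := v.isLt
          calc (v : ℕ) + (u : ℕ) * N < N + (u : ℕ) * N := by omega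
          _ = ((u : ℕ) + 1) * N := by ring
          _ ≤ d * N := Nat.mul_le_mul_right _ h1
        refine ⟨⟨(v : ℕ) + (u : ℕ) * N, hk⟩, ?_⟩
        have hUk : U ⟨(v : ℕ) + (u : ℕ) * N, hk⟩ = u := by
          apply Fin.ext
          show ((v : ℕ) + (u : ℕ) * N) / N = _
          rw [decomp_div hN v.isLt]
        have hRk : R ⟨(v : ℕ) + (u : ℕ) * N, hk⟩ = v := by
          apply Fin.ext
          show ((v : ℕ) + (u : ℕ) * N) % N = _
          rw [decomp_mod v.isLt]
        show Fin.cons (f (U ⟨(v : ℕ) + (u : ℕ) * N, hk⟩)) (a (R ⟨(v : ℕ) + (u : ℕ) * N, hk⟩)) = b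
        rw [hUk, hRk, hu, hv]
        funext i
        refine Fin.cases ?_ (fun j => ?_) i
        · simp
        · simp
      · rintro ⟨k, rfl⟩ i
        refine Fin.cases ?_ (fun j => ?_) i
        · simpa using (hfiff (f (U k))).mpr ⟨U k, rfl⟩
        · simpa using (haiff (fun j => a (R k) j)).mpr ⟨R k, rfl⟩ j
    · -- antichain
      intro k l hkl h
      have h0 : f (U l) ∣ f (U k) := by simpa using h 0
      have hle : f (U l) ≤ f (U k) := Nat.le_of_dvd (hfpos _) h0
      have hUle : (U l : ℕ) ≤ (U k : ℕ) := hfmono.le_iff_le.mp hle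
      have hk := hUR k
      have hl := hUR l
      rw [Fin.lt_def] at hkl
      have hUeq : (U l : ℕ) = (U k : ℕ) := by
        rcases Nat.lt_or_ge (U l : ℕ) (U k : ℕ) with hlt | hge
        · exfalso
          have h1 : ((U l : ℕ) + 1) * N ≤ (U k : ℕ) * N :=
            Nat.mul_le_mul_right _ hlt
          have h2 : (R l : ℕ) < N := (R l).isLt
          rw [Nat.succ_mul] at h1
          have hcalc : (l : ℕ) < (k : ℕ) := by
            calc (l : ℕ) = (R l : ℕ) + (U l : ℕ) * N := hl
              _ < N + (U l : ℕ) * N := Nat.add_lt_add_right h2 _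
              _ = (U l : ℕ) * N + N := Nat.add_comm _ _
              _ ≤ (U k : ℕ) * N := h1
              _ ≤ (R k : ℕ) + (U k : ℕ) * N := Nat.le_add_left _ _
              _ = (k : ℕ) := hk.symm
          omega
        · omega
      have hRlt : (R k : ℕ) < (R l : ℕ) := by
        have hUeq' : (U k : ℕ) * N = (U l : ℕ) * N := by rw [hUeq]
        omega
      refine haord (R k) (R l) hRlt (fun j => ?_)
      simpa using h j.succ
    · -- reverse product
      intro k i
      refine Fin.cases ?_ (fun j => ?_) i
      · simpa [hUrev k] using hfrev (U k)
      · simpa [hRrev k] using harev (R k) j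

/-- Proposition 10 (`prop:Ordering`).  For `q ∈ ℕ^m` (componentwise positive) there is a
linear ordering `a⁽¹⁾ < ⋯ < a⁽ᴺ⁾` of all tuples in `ℕ^m` dividing `q` componentwise such
that (1) `i < j` implies `a⁽ʲ⁾ ∤ a⁽ⁱ⁾`, and (2) `a⁽ⁱ⁾ · a⁽ᴺ⁻ⁱ⁺¹⁾ = q` for all `i`. -/
theorem divisor_tuple_ordering (m : ℕ) (q : Fin m → ℕ) (hq : ∀ i, 0 < q i) :
    ∃ (N : ℕ) (a : Fin N → (Fin m → ℕ)),
      Function.Injective a ∧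
      (∀ b : Fin m → ℕ, (∀ i, b i ∣ q i) ↔ ∃ k : Fin N, a k = b) ∧
      (∀ k l : Fin N, k < l → ¬ ∀ i, a l i ∣ a k i) ∧
      (∀ k : Fin N, ∀ i, a k i * a k.rev i = q i) := by
  exact aux_ordering m q hq
end

section
/- Let χ be an odd character of R^× with associated tuples f_χ of conductors and q_χ = r/f_χ. If a, c ∈ ℕ^m divide q_χ (componentwise) but the componentwise product a·c does not divide q_χ, then v_{χ,a}(c) = 0, where v_{χ,a} := Σ_{d ∈ ℕ^m, d ∣ a} μ(d)·χ̄*(d)·w_{χ,a/d}, and v_{χ,a}(c) is evaluated at the image of c in R. -/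
open scoped Classical in
/-- The first periodic Bernoulli function `B₁ : ℝ/ℤ → ℝ`, given by
`B₁(x + ℤ) = {x} - 1/2` for `x ∉ ℤ` and `B₁(x + ℤ) = 0` for `x ∈ ℤ`. -/
noncomputable def B1 (x : AddCircle (1 : ℝ)) : ℝ :=
  if x = 0 then 0 else ((AddCircle.equivIco 1 0 x : ℝ) - 1 / 2)

/-- For `a ∈ R = ℤ/r₁ ⊕ ⋯ ⊕ ℤ/r_m`, the function `S_a : R → ℂ`,
`S_a(c) = B₁(a₁c₁/r₁ + ⋯ + a_m c_m/r_m + ℤ)`. -/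
noncomputable def Sfun (m : ℕ) (r : Fin m → ℕ) [∀ i, NeZero (r i)]
    (a : ∀ i, ZMod (r i)) : (∀ i, ZMod (r i)) → ℂ :=
  fun c => (B1 ((((∑ i, ((a i).val * (c i).val : ℝ) / (r i : ℝ)) : ℝ) :
    AddCircle (1 : ℝ))) : ℂ)

/-- For a character `χ = (χ₁, …, χ_m)` of `R^×` (a tuple of Dirichlet characters with
`χᵢ` of modulus `rᵢ`) and `a ∈ R`, the function `w_{χ,a} = Σ_{b ∈ R^×} χ(b) S_{ab}`. -/
noncomputable def wfun (m : ℕ) (r : Fin m → ℕ) [∀ i, NeZero (r i)]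
    (χ : ∀ i, DirichletCharacter ℂ (r i)) (a : ∀ i, ZMod (r i)) :
    (∀ i, ZMod (r i)) → ℂ :=
  fun c => ∑ b : (∀ i, ZMod (r i))ˣ,
    (∏ i, χ i ((b : ∀ i, ZMod (r i)) i)) * Sfun m r (a * (b : ∀ i, ZMod (r i))) c

/-- `w_{χ,a}` for a tuple `a ∈ ℕ^m`, via the canonical map `ℤ^m → R`. -/
noncomputable def wfunN (m : ℕ) (r : Fin m → ℕ) [∀ i, NeZero (r i)]
    (χ : ∀ i, DirichletCharacter ℂ (r i)) (a : Fin m → ℕ) :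
    (∀ i, ZMod (r i)) → ℂ :=
  wfun m r χ (fun i => (a i : ZMod (r i)))

/-- The function `v_{χ,a} = Σ_{d ∣ a} μ(d) χ̄*(d) w_{χ,a/d}`, where the sum is over
tuples `d ∈ ℕ^m` dividing `a` componentwise, `μ(d) = μ(d₁)⋯μ(d_m)` and
`χ̄*(d) = χ̄₁*(d₁)⋯χ̄_m*(d_m)` with `χᵢ*` the primitive character inducing `χᵢ`. -/
noncomputable def vfun (m : ℕ) (r : Fin m → ℕ) [∀ i, NeZero (r i)]
    (χ : ∀ i, DirichletCharacter ℂ (r i)) (a : Fin m → ℕ) :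
    (∀ i, ZMod (r i)) → ℂ :=
  fun c => ∑ d ∈ Fintype.piFinset (fun i => (a i).divisors),
    (∏ i, (ArithmeticFunction.moebius (d i) : ℂ)) *
      (∏ i, (starRingEnd ℂ)
        ((χ i).primitiveCharacter ((d i : ZMod ((χ i).conductor))))) *
      wfunN m r χ (fun i => a i / d i) c



-- ### Auxiliary lemmas
open DirichletCharacter

lemma aux_unitsMap_coe {n d : ℕ} [NeZero n] (hd : d ∣ n) (x : (ZMod n)ˣ) :
    ((ZMod.unitsMap hd x : (ZMod d)ˣ) : ZMod d) = (((x : ZMod n).val : ℕ) : ZMod d) := by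
  simp [ZMod.unitsMap, ZMod.natCast_val]

lemma aux_unitsMap_eq_one_iff {n d : ℕ} [NeZero n] (hd : d ∣ n) (x : (ZMod n)ˣ) :
    ZMod.unitsMap hd x = 1 ↔ (x : ZMod n).val ≡ 1 [MOD d] := by
  rw [← ZMod.natCast_eq_natCast_iff, Nat.cast_one, ← aux_unitsMap_coe hd x]
  constructor
  · intro h; rw [h]; rfl
  · intro h; ext; exact h

lemma aux_unitsMap_eq_iff {n d : ℕ} [NeZero n] (hd : d ∣ n) (x y : (ZMod n)ˣ) :
    ZMod.unitsMap hd x = ZMod.unitsMap hd y ↔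
      (x : ZMod n).val ≡ (y : ZMod n).val [MOD d] := by
  rw [← ZMod.natCast_eq_natCast_iff, ← aux_unitsMap_coe hd x, ← aux_unitsMap_coe hd y]
  constructor
  · intro h; rw [h]
  · intro h; ext; exact h

/-- FactorsThrough is closed under gcd. -/
lemma aux_factorsThrough_gcd {n : ℕ} [NeZero n] {χ : DirichletCharacter ℂ n} {d e : ℕ}
    (hdn : d ∣ n) (hen : e ∣ n) (hd : χ.FactorsThrough d) (he : χ.FactorsThrough e) :
    χ.FactorsThrough (Nat.gcd d e) := by
  rw [factorsThrough_iff_ker_unitsMap (Nat.dvd_trans (Nat.gcd_dvd_left d e) hdn)]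
  intro u hu
  rw [MonoidHom.mem_ker, aux_unitsMap_eq_one_iff] at hu
  obtain ⟨k, hk1, hk2⟩ := Nat.chineseRemainder' hu
  -- k ≡ val u [MOD d], k ≡ 1 [MOD e]
  have hlcm : Nat.lcm d e ∣ n := Nat.lcm_dvd hdn hen
  have hkcop : Nat.Coprime k (Nat.lcm d e) := by
    by_contra hcop
    obtain ⟨p, hp, hpk, hpl⟩ := Nat.Prime.not_coprime_iff_dvd.mp hcop
    have hpde : p ∣ d * e := hpl.trans (Nat.lcm_dvd_mul d e)
    rcases (Nat.Prime.dvd_mul hp).mp hpde with hpd | hpe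
    · have h1 : (u : ZMod n).val ≡ 0 [MOD p] :=
        ((hk1.of_dvd hpd).symm.trans (Nat.modEq_zero_iff_dvd.mpr hpk))
      have h2 : p ∣ (u : ZMod n).val := Nat.modEq_zero_iff_dvd.mp h1
      have h3 : p ∣ Nat.gcd (u : ZMod n).val n := Nat.dvd_gcd h2 (hpd.trans hdn)
      rw [ZMod.val_coe_unit_coprime u] at h3
      exact hp.ne_one (Nat.dvd_one.mp h3)
    · have h1 : (1 : ℕ) ≡ 0 [MOD p] :=
        ((hk2.of_dvd hpe).symm.trans (Nat.modEq_zero_iff_dvd.mpr hpk))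
      exact hp.ne_one (Nat.dvd_one.mp (Nat.modEq_zero_iff_dvd.mp h1))
  obtain ⟨Y, hY⟩ := ZMod.unitsMap_surjective hlcm (ZMod.unitOfCoprime k hkcop)
  have hYval : (Y : ZMod n).val ≡ k [MOD Nat.lcm d e] := by
    have h0 := aux_unitsMap_coe hlcm Y
    rw [hY] at h0
    have h2 : ((ZMod.unitOfCoprime k hkcop : (ZMod (Nat.lcm d e))ˣ) : ZMod (Nat.lcm d e))
        = (k : ZMod (Nat.lcm d e)) := rfl
    rw [h2] at h0
    exact ((ZMod.natCast_eq_natCast_iff _ _ _).mp h0).symm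
  rw [MonoidHom.mem_ker]
  have key : MulChar.toUnitHom χ u = MulChar.toUnitHom χ Y := by
    obtain ⟨hdvd, χ₁, hχ₁⟩ := hd
    rw [hχ₁, changeLevel_toUnitHom, MonoidHom.comp_apply, MonoidHom.comp_apply]
    congr 1
    rw [aux_unitsMap_eq_iff]
    exact ((hYval.of_dvd (Nat.dvd_lcm_left d e)).trans hk1).symm
  have key2 : MulChar.toUnitHom χ Y = 1 := by
    obtain ⟨hedvd, χ₂, hχ₂⟩ := he
    rw [hχ₂, changeLevel_toUnitHom, MonoidHom.comp_apply]
    have h4 : ZMod.unitsMap hedvd Y = 1 := by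
      rw [aux_unitsMap_eq_one_iff]
      exact (hYval.of_dvd (Nat.dvd_lcm_right d e)).trans hk2
    rw [h4, map_one]
  rw [key, key2]

lemma aux_conductor_dvd_of_factorsThrough {n : ℕ} [NeZero n] {χ : DirichletCharacter ℂ n}
    {d : ℕ} (hdn : d ∣ n) (hd : χ.FactorsThrough d) : χ.conductor ∣ d := by
  have hg := aux_factorsThrough_gcd hdn (conductor_dvd_level χ) hd (factorsThrough_conductor χ)
  have hle : χ.conductor ≤ Nat.gcd d χ.conductor := Nat.sInf_le hg
  have hne : χ.conductor ≠ 0 := conductor_ne_zero χ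
  have heq : Nat.gcd d χ.conductor = χ.conductor :=
    Nat.le_antisymm (Nat.le_of_dvd (Nat.pos_of_ne_zero hne) (Nat.gcd_dvd_right _ _)) hle
  exact heq ▸ Nat.gcd_dvd_left _ _

lemma aux_factorsThrough_of_conductor_dvd {n : ℕ} {χ : DirichletCharacter ℂ n}
    {d : ℕ} (hdn : d ∣ n) (hd : χ.conductor ∣ d) : χ.FactorsThrough d :=
  ⟨hdn, changeLevel hd χ.primitiveCharacter, by
    rw [← changeLevel_trans χ.primitiveCharacter hd hdn]
    exact (factorsThrough_conductor χ).choose_spec.choose_spec⟩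


-- Sfun congruence

lemma aux_addCircle_nat {R : ℕ} {u v : ℕ} (h : u ≡ v [MOD R]) :
    (↑((u : ℝ) / (R : ℝ)) : AddCircle (1:ℝ)) = ↑((v : ℝ) / (R : ℝ)) := by
  rcases eq_or_ne (R : ℝ) 0 with hR | hR
  · have hR0 : R = 0 := by exact_mod_cast hR
    subst hR0
    have huv : u = v := by simpa [Nat.ModEq] using h
    rw [huv]
  · obtain ⟨k, hk⟩ := h.dvd
    rw [QuotientAddGroup.eq, AddSubgroup.mem_zmultiples_iff]
    refine ⟨k, ?_⟩
    have h2 : (v : ℝ) - (u : ℝ) = (R : ℝ) * (k : ℝ) := by exact_mod_cast hk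
    rw [zsmul_eq_mul, mul_one]
    have h3 : -((u : ℝ) / (R : ℝ)) + (v : ℝ) / (R : ℝ) = ((v : ℝ) - (u : ℝ)) / (R : ℝ) := by
      ring
    rw [h3, h2, mul_div_cancel_left₀ _ hR]

lemma aux_Sfun_congr (m : ℕ) (r : Fin m → ℕ) [∀ i, NeZero (r i)]
    (x y c : ∀ i, ZMod (r i)) (h : ∀ i, x i * c i = y i * c i) :
    Sfun m r x c = Sfun m r y c := by
  have key : ∀ z : ∀ i, ZMod (r i),
      (↑(∑ i, ((z i).val * (c i).val : ℝ) / (r i : ℝ)) : AddCircle (1:ℝ)) =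
        ∑ i, (↑((((z i * c i).val : ℕ) : ℝ) / (r i : ℝ)) : AddCircle (1:ℝ)) := by
    intro z
    calc (↑(∑ i, ((z i).val * (c i).val : ℝ) / (r i : ℝ)) : AddCircle (1:ℝ))
        = ∑ i, (↑(((z i).val * (c i).val : ℝ) / (r i : ℝ)) : AddCircle (1:ℝ)) :=
          map_sum (QuotientAddGroup.mk' (AddSubgroup.zmultiples (1:ℝ))) _ _
      _ = ∑ i, (↑((((z i * c i).val : ℕ) : ℝ) / (r i : ℝ)) : AddCircle (1:ℝ)) := ?_
    refine Finset.sum_congr rfl fun i _ => ?_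
    have hm : (z i).val * (c i).val ≡ (z i * c i).val [MOD r i] := by
      rw [ZMod.val_mul]; exact (Nat.mod_modEq _ _).symm
    have h3 := aux_addCircle_nat (R := r i) hm
    have h4 : (((z i).val * (c i).val : ℕ) : ℝ) = ((z i).val * (c i).val : ℝ) := by push_cast; ring
    rw [h4] at h3
    exact h3
  have harg : (↑(∑ i, ((x i).val * (c i).val : ℝ) / (r i : ℝ)) : AddCircle (1:ℝ)) =
      ↑(∑ i, ((y i).val * (c i).val : ℝ) / (r i : ℝ)) := by
    rw [key x, key y]
    exact Finset.sum_congr rfl fun i _ => by rw [h i]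
  show (B1 _ : ℂ) = (B1 _ : ℂ)
  exact congrArg (fun t => ((B1 t : ℝ) : ℂ)) harg

-- ### Section 3 : wfun lemmas
lemma aux_wfun_congr (m : ℕ) (r : Fin m → ℕ) [∀ i, NeZero (r i)]
    (χ : ∀ i, DirichletCharacter ℂ (r i)) (X Y c : ∀ i, ZMod (r i))
    (h : ∀ i, X i * c i = Y i * c i) :
    wfun m r χ X c = wfun m r χ Y c := by
  unfold wfun
  refine Finset.sum_congr rfl fun b _ => ?_
  congr 1
  refine aux_Sfun_congr m r _ _ c fun i => ?_
  show (X i * (b : ∀ i, ZMod (r i)) i) * c i = (Y i * (b : ∀ i, ZMod (r i)) i) * c i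
  calc (X i * (b : ∀ i, ZMod (r i)) i) * c i = (X i * c i) * (b : ∀ i, ZMod (r i)) i := by ring
  _ = (Y i * c i) * (b : ∀ i, ZMod (r i)) i := by rw [h i]
  _ = (Y i * (b : ∀ i, ZMod (r i)) i) * c i := by ring

lemma aux_wfun_unit (m : ℕ) (r : Fin m → ℕ) [∀ i, NeZero (r i)]
    (χ : ∀ i, DirichletCharacter ℂ (r i)) (X c : ∀ i, ZMod (r i))
    (U : (∀ i, ZMod (r i))ˣ) :
    wfun m r χ X c =
      (∏ i, χ i ((U : ∀ i, ZMod (r i)) i)) * wfun m r χ (X * ↑U) c := by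
  unfold wfun
  rw [Finset.mul_sum]
  rw [← Equiv.sum_comp (Equiv.mulLeft U)
    (fun b : (∀ i, ZMod (r i))ˣ =>
      (∏ i, χ i ((b : ∀ i, ZMod (r i)) i)) * Sfun m r (X * (b : ∀ i, ZMod (r i))) c)]
  refine Finset.sum_congr rfl fun b _ => ?_
  have hco : ((Equiv.mulLeft U b : (∀ i, ZMod (r i))ˣ) : ∀ i, ZMod (r i))
      = (U : ∀ i, ZMod (r i)) * (b : ∀ i, ZMod (r i)) := rfl
  rw [hco]
  have hprod : (∏ i, χ i (((U : ∀ i, ZMod (r i)) * (b : ∀ i, ZMod (r i))) i))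
      = (∏ i, χ i ((U : ∀ i, ZMod (r i)) i)) * ∏ i, χ i ((b : ∀ i, ZMod (r i)) i) := by
    rw [← Finset.prod_mul_distrib]
    exact Finset.prod_congr rfl fun i _ => by rw [Pi.mul_apply, map_mul]
  rw [hprod, mul_assoc, ← mul_assoc X]

lemma aux_wfun_eq_zero (m : ℕ) (r : Fin m → ℕ) [∀ i, NeZero (r i)]
    (χ : ∀ i, DirichletCharacter ℂ (r i)) (X c : ∀ i, ZMod (r i)) (i₀ : Fin m)
    (h : (ZMod (r i₀))ˣ) (hχ : χ i₀ ↑h ≠ 1)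
    (hfix : X i₀ * c i₀ * ↑h = X i₀ * c i₀) :
    wfun m r χ X c = 0 := by
  classical
  have hval : Function.update (1 : ∀ i, ZMod (r i)) i₀ (↑h : ZMod (r i₀)) *
      Function.update (1 : ∀ i, ZMod (r i)) i₀ (↑h⁻¹ : ZMod (r i₀)) = 1 := by
    funext i
    by_cases hi : i = i₀
    · subst hi; simp
    · simp [Function.update_of_ne hi]
  have hval2 : Function.update (1 : ∀ i, ZMod (r i)) i₀ (↑h⁻¹ : ZMod (r i₀)) *
      Function.update (1 : ∀ i, ZMod (r i)) i₀ (↑h : ZMod (r i₀)) = 1 := by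
    rw [mul_comm]; exact hval
  set U : (∀ i, ZMod (r i))ˣ := ⟨_, _, hval, hval2⟩ with hU
  have h1 := aux_wfun_unit m r χ X c U
  have h2 : wfun m r χ (X * ↑U) c = wfun m r χ X c := by
    refine aux_wfun_congr m r χ _ _ c fun i => ?_
    have hUi : (↑U : ∀ j, ZMod (r j)) i
        = Function.update (1 : ∀ j, ZMod (r j)) i₀ (↑h : ZMod (r i₀)) i := rfl
    rw [Pi.mul_apply, hUi]
    rcases eq_or_ne i i₀ with hi | hi
    · subst hi
      rw [Function.update_self, mul_right_comm, hfix]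
    · rw [Function.update_of_ne hi, Pi.one_apply, mul_one]
  have h3 : (∏ i, χ i ((U : ∀ i, ZMod (r i)) i)) = χ i₀ ↑h := by
    rw [Fintype.prod_eq_single i₀ (fun i hi => ?_)]
    · show χ i₀ (Function.update (1 : ∀ j, ZMod (r j)) i₀ (↑h : ZMod (r i₀)) i₀) = _
      rw [Function.update_self]
    · show χ i (Function.update (1 : ∀ j, ZMod (r j)) i₀ (↑h : ZMod (r i₀)) i) = 1
      rw [Function.update_of_ne hi, Pi.one_apply, map_one]
  rw [h2, h3] at h1
  have h4 : (1 - χ i₀ ↑h) * wfun m r χ X c = 0 := by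
    rw [sub_mul, one_mul]
    exact sub_eq_zero.mpr h1
  rcases mul_eq_zero.mp h4 with h5 | h5
  · exact absurd (by linear_combination -h5 : χ i₀ (↑h : ZMod (r i₀)) = 1) hχ
  · exact h5

-- ### Section 3.5 : vanishing and shifting
open DirichletCharacter

lemma aux_unitsMap_eq_one_iff' {n d : ℕ} [NeZero n] (hd : d ∣ n) (x : (ZMod n)ˣ) :
    ZMod.unitsMap hd x = 1 ↔ (x : ZMod n).val ≡ 1 [MOD d] := by
  rw [← ZMod.natCast_eq_natCast_iff, Nat.cast_one]
  constructor
  · intro h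
    have h0 : ((ZMod.unitsMap hd x : (ZMod d)ˣ) : ZMod d) = (((x : ZMod n).val : ℕ) : ZMod d) := by
      simp [ZMod.unitsMap, ZMod.natCast_val]
    rw [h] at h0; exact h0.symm
  · intro h
    ext
    rw [Units.val_one]
    show ((ZMod.unitsMap hd x : (ZMod d)ˣ) : ZMod d) = 1
    simp only [ZMod.unitsMap, Units.coe_map, MonoidHom.coe_coe, ZMod.castHom_apply]
    rw [← ZMod.natCast_val]
    exact h

lemma aux_exists_bad_unit {R : ℕ} [NeZero R] (χ : DirichletCharacter ℂ R) {s : ℕ}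
    (hs : s ∣ R) (hft : ¬ χ.FactorsThrough s) :
    ∃ h : (ZMod R)ˣ, χ ↑h ≠ 1 ∧ ∃ t : ZMod R, (↑h : ZMod R) = 1 + (s : ZMod R) * t := by
  rw [factorsThrough_iff_ker_unitsMap hs] at hft
  simp only [SetLike.le_def, not_forall] at hft
  obtain ⟨x, hx1, hx2⟩ := hft
  refine ⟨x, ?_, ?_⟩
  · intro heq
    apply hx2
    rw [MonoidHom.mem_ker]
    ext
    rw [MulChar.coe_toUnitHom]
    simpa using heq
  · rw [MonoidHom.mem_ker, aux_unitsMap_eq_one_iff' hs x] at hx1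
    obtain ⟨k, hk⟩ := hx1.dvd
    have hval : (((x : ZMod R).val : ℤ)) = 1 + (s : ℤ) * (-k) := by
      have : (1 : ℤ) - ((x : ZMod R).val : ℤ) = (s : ℤ) * k := by exact_mod_cast hk
      linarith
    refine ⟨((-k : ℤ) : ZMod R), ?_⟩
    have h2 : (((x : ZMod R).val : ℕ) : ZMod R) = (x : ZMod R) := by
      rw [ZMod.natCast_val, ZMod.cast_id]
    calc (↑x : ZMod R) = (((x : ZMod R).val : ℤ) : ZMod R) := by
          rw [Int.cast_natCast, h2]
      _ = ((1 + (s : ℤ) * (-k) : ℤ) : ZMod R) := by rw [hval]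
      _ = 1 + (s : ZMod R) * ((-k : ℤ) : ZMod R) := by push_cast; ring

lemma aux_wfunN_vanish (m : ℕ) (r : Fin m → ℕ) [∀ i, NeZero (r i)]
    (χ : ∀ i, DirichletCharacter ℂ (r i)) (A C : Fin m → ℕ) (i₀ : Fin m) (s : ℕ)
    (hs : s ∣ r i₀) (hft : ¬ (χ i₀).FactorsThrough s) (hNs : r i₀ ∣ A i₀ * C i₀ * s) :
    wfun m r χ (fun i => (A i : ZMod (r i))) (fun i => (C i : ZMod (r i))) = 0 := by
  obtain ⟨h, hχ, t, ht⟩ := aux_exists_bad_unit (χ i₀) hs hft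
  refine aux_wfun_eq_zero m r χ _ _ i₀ h hχ ?_
  show ((A i₀ : ZMod (r i₀)) * (C i₀ : ZMod (r i₀))) * ↑h
      = (A i₀ : ZMod (r i₀)) * (C i₀ : ZMod (r i₀))
  have hz : (A i₀ : ZMod (r i₀)) * (C i₀ : ZMod (r i₀)) * (s : ZMod (r i₀)) = 0 := by
    rw [← Nat.cast_mul, ← Nat.cast_mul]
    exact (ZMod.natCast_eq_zero_iff _ _).mpr hNs
  rw [ht]
  calc (A i₀ : ZMod (r i₀)) * (C i₀ : ZMod (r i₀)) * (1 + (s : ZMod (r i₀)) * t)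
      = (A i₀ : ZMod (r i₀)) * (C i₀ : ZMod (r i₀))
        + ((A i₀ : ZMod (r i₀)) * (C i₀ : ZMod (r i₀)) * (s : ZMod (r i₀))) * t := by ring
    _ = (A i₀ : ZMod (r i₀)) * (C i₀ : ZMod (r i₀)) := by rw [hz]; ring

lemma aux_wfun_shift (m : ℕ) (r : Fin m → ℕ) [∀ i, NeZero (r i)]
    (χ : ∀ i, DirichletCharacter ℂ (r i)) (X X' C : ∀ i, ZMod (r i)) (i₀ : Fin m)
    (u : (ZMod (r i₀))ˣ)
    (hne : ∀ i, i ≠ i₀ → X' i * C i = X i * C i)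
    (hmain : X' i₀ * C i₀ * ↑u = X i₀ * C i₀) :
    wfun m r χ X' C = χ i₀ ↑u * wfun m r χ X C := by
  classical
  have hval : Function.update (1 : ∀ i, ZMod (r i)) i₀ (↑u : ZMod (r i₀)) *
      Function.update (1 : ∀ i, ZMod (r i)) i₀ (↑u⁻¹ : ZMod (r i₀)) = 1 := by
    funext i
    by_cases hi : i = i₀
    · subst hi; simp
    · simp [Function.update_of_ne hi]
  have hval2 : Function.update (1 : ∀ i, ZMod (r i)) i₀ (↑u⁻¹ : ZMod (r i₀)) *
      Function.update (1 : ∀ i, ZMod (r i)) i₀ (↑u : ZMod (r i₀)) = 1 := by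
    rw [mul_comm]; exact hval
  set U : (∀ i, ZMod (r i))ˣ := ⟨_, _, hval, hval2⟩ with hU
  have h1 := aux_wfun_unit m r χ X' C U
  have h2 : wfun m r χ (X' * ↑U) C = wfun m r χ X C := by
    refine aux_wfun_congr m r χ _ _ C fun i => ?_
    have hUi : (↑U : ∀ j, ZMod (r j)) i
        = Function.update (1 : ∀ j, ZMod (r j)) i₀ (↑u : ZMod (r i₀)) i := rfl
    rw [Pi.mul_apply, hUi]
    rcases eq_or_ne i i₀ with hi | hi
    · subst hi
      rw [Function.update_self, mul_right_comm, hmain]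
    · rw [Function.update_of_ne hi, Pi.one_apply, mul_one]
      exact hne i hi
  have h3 : (∏ i, χ i ((U : ∀ i, ZMod (r i)) i)) = χ i₀ ↑u := by
    rw [Fintype.prod_eq_single i₀ (fun i hi => ?_)]
    · show χ i₀ (Function.update (1 : ∀ j, ZMod (r j)) i₀ (↑u : ZMod (r i₀)) i₀) = _
      rw [Function.update_self]
    · show χ i (Function.update (1 : ∀ j, ZMod (r j)) i₀ (↑u : ZMod (r i₀)) i) = 1
      rw [Function.update_of_ne hi, Pi.one_apply, map_one]
  rw [h1, h2, h3]


-- bracket lemma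

lemma aux_div_ne_zero {a b : ℕ} (h : a ∣ b) (hb : b ≠ 0) : b / a ≠ 0 := by
  intro h0
  have h1 := Nat.mul_div_cancel' h
  rw [h0, mul_zero] at h1
  exact hb h1.symm

lemma aux_dvd_helper {g s R x : ℕ} (hgs : g * s = R) (hgx : g ∣ x) : R ∣ x * s := by
  obtain ⟨e, he⟩ := hgx
  exact ⟨e, by rw [he, ← hgs]; ring⟩

lemma aux_cast_decomp {R s : ℕ} [NeZero R] (x : ZMod R) (w : ℕ)
    (h : x.val ≡ w [MOD s]) : ∃ t : ZMod R, x = (w : ZMod R) + (s : ZMod R) * t := by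
  obtain ⟨k, hk⟩ := h.dvd
  have hval : ((x.val : ℤ)) = (w : ℤ) + (s : ℤ) * (-k) := by
    have h2 : (w : ℤ) - (x.val : ℤ) = (s : ℤ) * k := by exact_mod_cast hk
    linarith
  refine ⟨-((k : ℤ) : ZMod R), ?_⟩
  have h2 : ((x.val : ℕ) : ZMod R) = x := by rw [ZMod.natCast_val, ZMod.cast_id]
  have h4 := congrArg (fun z : ℤ => (z : ZMod R)) hval
  simp only [Int.cast_add, Int.cast_mul, Int.cast_natCast, Int.cast_neg] at h4
  rw [h2] at h4
  exact h4

lemma aux_bracket (m : ℕ) (r : Fin m → ℕ) [∀ i, NeZero (r i)]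
    (χ : ∀ i, DirichletCharacter ℂ (r i)) (i₀ : Fin m) (p : ℕ) (hp : p.Prime)
    (A A' C : Fin m → ℕ)
    (hpA : A i₀ = p * A' i₀)
    (hA : ∀ i, i ≠ i₀ → A i = A' i)
    (hN'0 : A' i₀ * C i₀ ≠ 0)
    (hκ : (r i₀ / (χ i₀).conductor).factorization p ≤ (A' i₀ * C i₀).factorization p) :
    wfun m r χ (fun i => (A i : ZMod (r i))) (fun i => (C i : ZMod (r i)))
      = (starRingEnd ℂ) ((χ i₀).primitiveCharacter ((p : ZMod ((χ i₀).conductor)))) *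
        wfun m r χ (fun i => (A' i : ZMod (r i))) (fun i => (C i : ZMod (r i))) := by
  classical
  set R := r i₀ with hRdef
  have hR0 : R ≠ 0 := NeZero.ne _
  set f := (χ i₀).conductor with hfdef
  have hf0 : f ≠ 0 := DirichletCharacter.conductor_ne_zero (χ i₀)
  have hfR : f ∣ R := DirichletCharacter.conductor_dvd_level _
  set q := R / f with hqdef
  have hfq : f * q = R := Nat.mul_div_cancel' hfR
  have hq0 : q ≠ 0 := aux_div_ne_zero hfR hR0
  set N' := A' i₀ * C i₀ with hN'def
  set N := A i₀ * C i₀ with hNdef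
  have hN : N = p * N' := by rw [hNdef, hN'def, hpA]; ring
  have hN0 : N ≠ 0 := by
    rw [hN]; exact mul_ne_zero hp.pos.ne' hN'0
  set s := R / Nat.gcd N' R with hsdef
  set s₁ := R / Nat.gcd N R with hs₁def
  have hg'R : Nat.gcd N' R ∣ R := Nat.gcd_dvd_right _ _
  have hgR : Nat.gcd N R ∣ R := Nat.gcd_dvd_right _ _
  have hsR : s ∣ R := Nat.div_dvd_of_dvd hg'R
  have hs₁R : s₁ ∣ R := Nat.div_dvd_of_dvd hgR
  have hs0 : s ≠ 0 := aux_div_ne_zero hg'R hR0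
  have hs₁0 : s₁ ≠ 0 := aux_div_ne_zero hgR hR0
  have hgs : Nat.gcd N' R * s = R := Nat.mul_div_cancel' hg'R
  have hgs₁ : Nat.gcd N R * s₁ = R := Nat.mul_div_cancel' hgR
  have hRN's : R ∣ N' * s := aux_dvd_helper hgs (Nat.gcd_dvd_left N' R)
  have hRNs : R ∣ N * s := by
    rw [hN, mul_assoc]
    exact Dvd.dvd.mul_left hRN's p
  have hRNs₁ : R ∣ N * s₁ := aux_dvd_helper hgs₁ (Nat.gcd_dvd_left N R)
  -- valuations
  have hvR : R.factorization p = f.factorization p + q.factorization p := by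
    rw [← hfq, Nat.factorization_mul hf0 hq0]; simp
  have hvN : N.factorization p = 1 + N'.factorization p := by
    rw [hN, Nat.factorization_mul hp.pos.ne' hN'0, Finsupp.add_apply, hp.factorization_self]
  have hvs : s.factorization p
      = R.factorization p - min (N'.factorization p) (R.factorization p) := by
    rw [hsdef, Nat.factorization_div hg'R, Finsupp.tsub_apply,
      Nat.factorization_gcd hN'0 hR0, Finsupp.inf_apply]
  have hvs₁ : s₁.factorization p
      = R.factorization p - min (N.factorization p) (R.factorization p) := by
    rw [hs₁def, Nat.factorization_div hgR, Finsupp.tsub_apply,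
      Nat.factorization_gcd hN0 hR0, Finsupp.inf_apply]
  by_cases hFT : (χ i₀).FactorsThrough s
  · have hfs : f ∣ s := aux_conductor_dvd_of_factorsThrough hsR hFT
    by_cases hpf : p ∣ f
    · -- conj χ*(p) = 0 and W₁ = 0
      have hz : ((χ i₀).primitiveCharacter ((p : ZMod ((χ i₀).conductor)))) = 0 := by
        refine MulChar.map_nonunit _ ?_
        rw [ZMod.isUnit_prime_iff_not_dvd hp]
        exact fun h => h hpf
      have hvf1 : 1 ≤ f.factorization p := hp.factorization_pos_of_dvd hf0 hpf
      have hft₁ : ¬ (χ i₀).FactorsThrough s₁ := by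
        intro hFT₁
        have hfs₁ : f ∣ s₁ := aux_conductor_dvd_of_factorsThrough hs₁R hFT₁
        have hle : f.factorization p ≤ s₁.factorization p :=
          ((Nat.factorization_le_iff_dvd hf0 hs₁0).mpr hfs₁) p
        omega
      have hW₁ : wfun m r χ (fun i => (A i : ZMod (r i))) (fun i => (C i : ZMod (r i))) = 0 :=
        aux_wfunN_vanish m r χ A C i₀ s₁ hs₁R hft₁ hRNs₁
      rw [hW₁, hz, map_zero, zero_mul]
    · -- p doesn't divide f : substitution case
      have hvf0 : f.factorization p = 0 := Nat.factorization_eq_zero_of_not_dvd hpf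
      have hps : ¬ p ∣ s := by
        intro hps
        have h1 : 1 ≤ s.factorization p := (hp.dvd_iff_one_le_factorization hs0).mp hps
        omega
      have hsu : IsUnit (p : ZMod s) := (ZMod.isUnit_prime_iff_not_dvd hp).mpr hps
      haveI : NeZero R := ⟨hR0⟩
      obtain ⟨u, hu⟩ := ZMod.unitsMap_surjective (n := s) hsR hsu.unit
      have hucast : ((u : ZMod R)).val ≡ p [MOD s] := by
        have h0 : ((ZMod.unitsMap hsR u : (ZMod s)ˣ) : ZMod s)
            = (((u : ZMod R).val : ℕ) : ZMod s) := by
          simp [ZMod.unitsMap, ZMod.natCast_val]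
        rw [hu, IsUnit.unit_spec] at h0
        exact (ZMod.natCast_eq_natCast_iff _ _ _).mp h0.symm
      obtain ⟨t, ht⟩ := aux_cast_decomp (u : ZMod R) p hucast
      -- χ i₀ ↑u = χ*(p)
      have hχu : χ i₀ ↑u
          = (χ i₀).primitiveCharacter ((p : ZMod ((χ i₀).conductor))) := by
        have hspec : χ i₀ = DirichletCharacter.changeLevel hfR (χ i₀).primitiveCharacter :=
          (DirichletCharacter.factorsThrough_conductor (χ i₀)).choose_spec.choose_spec
        have hmod : (u : ZMod R).val ≡ p [MOD f] := hucast.of_dvd hfs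
        have hcast : (((u : ZMod R)).cast : ZMod f) = (p : ZMod f) := by
          calc (((u : ZMod R)).cast : ZMod f) = (((u : ZMod R).val : ℕ) : ZMod f) :=
                (ZMod.natCast_val _).symm
            _ = (p : ZMod f) := (ZMod.natCast_eq_natCast_iff _ _ _).mpr hmod
        conv_lhs => rw [hspec]
        rw [DirichletCharacter.changeLevel_eq_cast_of_dvd, hcast]
      -- the shift
      have hshift : wfun m r χ (fun i => (A' i : ZMod (r i))) (fun i => (C i : ZMod (r i)))
          = χ i₀ ↑u * wfun m r χ (fun i => (A i : ZMod (r i))) (fun i => (C i : ZMod (r i))) := by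
        refine aux_wfun_shift m r χ _ _ _ i₀ u (fun i hi => by rw [hA i hi]) ?_
        have hzero : (N' : ZMod R) * (s : ZMod R) = 0 := by
          rw [← Nat.cast_mul]
          exact (ZMod.natCast_eq_zero_iff _ _).mpr hRN's
        show (A' i₀ : ZMod R) * (C i₀ : ZMod R) * ↑u = (A i₀ : ZMod R) * (C i₀ : ZMod R)
        have hN'cast : (A' i₀ : ZMod R) * (C i₀ : ZMod R) = (N' : ZMod R) := by
          rw [hN'def]; push_cast; ring
        have hNcast : (A i₀ : ZMod R) * (C i₀ : ZMod R) = (N : ZMod R) := by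
          rw [hNdef]; push_cast; ring
        rw [hN'cast, hNcast, ht, hN]
        calc (N' : ZMod R) * ((p : ZMod R) + (s : ZMod R) * t)
            = (N' : ZMod R) * (p : ZMod R) + ((N' : ZMod R) * (s : ZMod R)) * t := by ring
          _ = (N' : ZMod R) * (p : ZMod R) := by rw [hzero]; ring
          _ = ((p * N' : ℕ) : ZMod R) := by push_cast; ring
      -- conclude
      rw [hshift, hχu]
      have hpu : IsUnit (p : ZMod f) := (ZMod.isUnit_prime_iff_not_dvd hp).mpr hpf
      set z := (χ i₀).primitiveCharacter ((p : ZMod ((χ i₀).conductor))) with hzdef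
      have hnorm : ‖z‖ = 1 := by
        rw [hzdef, ← hpu.unit_spec]
        exact DirichletCharacter.unit_norm_eq_one _ hpu.unit
      have hcz : (starRingEnd ℂ) z * z = 1 := by
        have h1 : z * (starRingEnd ℂ) z = ((Complex.normSq z : ℝ) : ℂ) := Complex.mul_conj z
        rw [mul_comm] at h1
        rw [h1, Complex.normSq_eq_norm_sq, hnorm]
        norm_num
      rw [← mul_assoc, hcz, one_mul]
  · -- χ doesn't factor through s : both sides vanish
    have hW₁ : wfun m r χ (fun i => (A i : ZMod (r i))) (fun i => (C i : ZMod (r i))) = 0 :=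
      aux_wfunN_vanish m r χ A C i₀ s hsR hFT hRNs
    have hW₂ : wfun m r χ (fun i => (A' i : ZMod (r i))) (fun i => (C i : ZMod (r i))) = 0 :=
      aux_wfunN_vanish m r χ A' C i₀ s hsR hFT hRN's
    rw [hW₁, hW₂, mul_zero]


/-- Proposition 11 (`prop:v_chi_a_c_equals_0`).  Let `χ` be an odd character of `R^×`
with conductor tuple `f_χ` and `q_χ = r / f_χ`.  If `a, c ∈ ℕ^m` divide `q_χ`
componentwise but `a·c ∤ q_χ`, then `v_{χ,a}(c) = 0`. -/
theorem v_chi_a_c_eq_zero (m : ℕ) (hm : 0 < m) (r : Fin m → ℕ) [∀ i, NeZero (r i)]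
    (χ : ∀ i, DirichletCharacter ℂ (r i)) (hodd : (∏ i, χ i (-1)) = -1)
    (a c : Fin m → ℕ)
    (ha : ∀ i, a i ∣ r i / (χ i).conductor)
    (hc : ∀ i, c i ∣ r i / (χ i).conductor)
    (hac : ¬ ∀ i, a i * c i ∣ r i / (χ i).conductor) :
    vfun m r χ a (fun i => (c i : ZMod (r i))) = 0 := by
  classical
  push_neg at hac
  obtain ⟨i₀, hi₀⟩ := hac
  -- basic nonvanishing
  have hr0 : ∀ i, r i ≠ 0 := fun i => NeZero.ne _
  have hq0 : ∀ i, r i / (χ i).conductor ≠ 0 := fun i =>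
    aux_div_ne_zero (DirichletCharacter.conductor_dvd_level _) (hr0 i)
  have ha0 : ∀ i, a i ≠ 0 := fun i h => hq0 i (Nat.eq_zero_of_zero_dvd (h ▸ ha i))
  have hc0 : ∀ i, c i ≠ 0 := fun i h => hq0 i (Nat.eq_zero_of_zero_dvd (h ▸ hc i))
  have hac0 : a i₀ * c i₀ ≠ 0 := mul_ne_zero (ha0 i₀) (hc0 i₀)
  -- find the prime p
  rw [← Nat.factorization_le_iff_dvd hac0 (hq0 i₀)] at hi₀
  rw [Finsupp.le_iff] at hi₀
  push_neg at hi₀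
  obtain ⟨p, hpmem, hplt⟩ := hi₀
  have hp : p.Prime := Nat.prime_of_mem_primeFactors (Nat.support_factorization _ ▸ hpmem)
  have hαγ : (r i₀ / (χ i₀).conductor).factorization p
      < (a i₀).factorization p + (c i₀).factorization p := by
    rw [Nat.factorization_mul (ha0 i₀) (hc0 i₀)] at hplt
    simpa using Nat.lt_of_not_le (by simpa using hplt)
  have hακ : (a i₀).factorization p ≤ (r i₀ / (χ i₀).conductor).factorization p :=
    ((Nat.factorization_le_iff_dvd (ha0 i₀) (hq0 i₀)).mpr (ha i₀)) p
  have hγκ : (c i₀).factorization p ≤ (r i₀ / (χ i₀).conductor).factorization p :=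
    ((Nat.factorization_le_iff_dvd (hc0 i₀) (hq0 i₀)).mpr (hc i₀)) p
  have hα1 : 1 ≤ (a i₀).factorization p := by omega
  have hpa : p ∣ a i₀ := (hp.dvd_iff_one_le_factorization (ha0 i₀)).mpr hα1
  -- notation
  set D := Fintype.piFinset (fun i => (a i).divisors) with hD
  set C : ∀ i, ZMod (r i) := fun i => (c i : ZMod (r i)) with hC
  set T : (Fin m → ℕ) → ℂ := fun d =>
    (∏ i, (ArithmeticFunction.moebius (d i) : ℂ)) *
      (∏ i, (starRingEnd ℂ)
        ((χ i).primitiveCharacter ((d i : ZMod ((χ i).conductor))))) *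
      wfunN m r χ (fun i => a i / d i) C with hT
  show ∑ d ∈ D, T d = 0
  -- drop non-squarefree terms
  have hzero : ∀ d ∈ D.filter (fun d => ¬ Squarefree (d i₀)), T d = 0 := by
    intro d hd
    rw [Finset.mem_filter] at hd
    have : (∏ i, (ArithmeticFunction.moebius (d i) : ℂ)) = 0 := by
      refine Finset.prod_eq_zero (Finset.mem_univ i₀) ?_
      rw [ArithmeticFunction.moebius_eq_zero_of_not_squarefree hd.2]
      norm_num
    rw [hT]
    simp only [this, zero_mul]
  have hsplit1 : ∑ d ∈ D, T d = ∑ d ∈ D.filter (fun d => Squarefree (d i₀)), T d := by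
    rw [← Finset.sum_filter_add_sum_filter_not D (fun d => Squarefree (d i₀)) T]
    rw [Finset.sum_eq_zero hzero, add_zero]
  set Dsf := D.filter (fun d => Squarefree (d i₀)) with hDsf
  have hsplit2 : ∑ d ∈ Dsf, T d
      = ∑ d ∈ Dsf.filter (fun d => ¬ p ∣ d i₀), T d
        + ∑ d ∈ Dsf.filter (fun d => p ∣ d i₀), T d := by
    rw [add_comm, Finset.sum_filter_add_sum_filter_not Dsf (fun d => p ∣ d i₀) T]
  -- the bijection
  set φ : (Fin m → ℕ) → (Fin m → ℕ) := fun d => Function.update d i₀ (p * d i₀) with hφ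
  set ψ : (Fin m → ℕ) → (Fin m → ℕ) := fun d => Function.update d i₀ (d i₀ / p) with hψ
  have hmem : ∀ d ∈ Dsf.filter (fun d => ¬ p ∣ d i₀), ∀ i, d i ∣ a i := by
    intro d hd i
    rw [Finset.mem_filter, hDsf, Finset.mem_filter, hD, Fintype.mem_piFinset] at hd
    exact (Nat.mem_divisors.mp (hd.1.1 i)).1
  have hbij : ∑ d ∈ Dsf.filter (fun d => p ∣ d i₀), T d
      = ∑ d ∈ Dsf.filter (fun d => ¬ p ∣ d i₀), T (φ d) := by
    refine Finset.sum_nbij' ψ φ ?_ ?_ ?_ ?_ ?_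
    · -- ψ maps into target
      intro d hd
      rw [Finset.mem_filter, hDsf, Finset.mem_filter, hD, Fintype.mem_piFinset] at hd ⊢
      obtain ⟨⟨hdiv, hsf⟩, hpd⟩ := hd
      have hd0 : d i₀ ≠ 0 := (Nat.pos_of_mem_divisors (hdiv i₀)).ne'
      refine ⟨⟨fun i => ?_, ?_⟩, ?_⟩
      · rcases eq_or_ne i i₀ with rfl | hi
        · rw [hψ]; simp only [Function.update_self]
          exact Nat.mem_divisors.mpr
            ⟨(Nat.div_dvd_of_dvd hpd).trans (Nat.mem_divisors.mp (hdiv i)).1, ha0 i⟩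
        · rw [hψ]; simp only [Function.update_of_ne hi]; exact hdiv i
      · rw [hψ]; simp only [Function.update_self]
        exact hsf.squarefree_of_dvd (Nat.div_dvd_of_dvd hpd)
      · rw [hψ]; simp only [Function.update_self]
        intro hcon
        obtain ⟨e, he⟩ := hcon
        have : p * p ∣ d i₀ := by
          have h1 : p * (d i₀ / p) = d i₀ := Nat.mul_div_cancel' hpd
          exact ⟨e, by rw [← h1, he]; ring⟩
        exact hp.one_lt.ne' (Nat.isUnit_iff.mp (hsf p this))
    · -- φ maps into source
      intro d hd
      rw [Finset.mem_filter, hDsf, Finset.mem_filter, hD, Fintype.mem_piFinset] at hd ⊢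
      obtain ⟨⟨hdiv, hsf⟩, hpd⟩ := hd
      have hcop : Nat.Coprime p (d i₀) := (hp.coprime_iff_not_dvd).mpr hpd
      refine ⟨⟨fun i => ?_, ?_⟩, ?_⟩
      · rcases eq_or_ne i i₀ with rfl | hi
        · rw [hφ]; simp only [Function.update_self]
          exact Nat.mem_divisors.mpr
            ⟨hcop.mul_dvd_of_dvd_of_dvd hpa (Nat.mem_divisors.mp (hdiv i)).1, ha0 i⟩
        · rw [hφ]; simp only [Function.update_of_ne hi]; exact hdiv i
      · rw [hφ]; simp only [Function.update_self]
        exact (Nat.squarefree_mul hcop).mpr ⟨hp.squarefree, hsf⟩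
      · rw [hφ]; simp only [Function.update_self]
        exact Dvd.intro _ rfl
    · -- φ ∘ ψ = id on source
      intro d hd
      rw [Finset.mem_filter] at hd
      rw [hφ, hψ]
      funext i
      rcases eq_or_ne i i₀ with rfl | hi
      · simp only [Function.update_idem, Function.update_self]
        rw [Nat.mul_div_cancel' hd.2]
      · simp only [Function.update_idem, Function.update_of_ne hi]
    · -- ψ ∘ φ = id on target
      intro d hd
      rw [hφ, hψ]
      funext i
      rcases eq_or_ne i i₀ with rfl | hi
      · simp only [Function.update_idem, Function.update_self]
        rw [Nat.mul_div_cancel_left _ hp.pos]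
      · simp only [Function.update_idem, Function.update_of_ne hi]
    · -- values agree
      intro d hd
      rw [Finset.mem_filter] at hd
      have h1 : φ (ψ d) = d := by
        rw [hφ, hψ]
        funext i
        rcases eq_or_ne i i₀ with rfl | hi
        · simp only [Function.update_idem, Function.update_self]
          rw [Nat.mul_div_cancel' hd.2]
        · simp only [Function.update_idem, Function.update_of_ne hi]
      rw [h1]
  -- per-term cancellation
  have hkey : ∀ d ∈ Dsf.filter (fun d => ¬ p ∣ d i₀), T d + T (φ d) = 0 := by
    intro d hd
    rw [Finset.mem_filter, hDsf, Finset.mem_filter, hD, Fintype.mem_piFinset] at hd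
    obtain ⟨⟨hdiv, hsf⟩, hnd⟩ := hd
    have hd0 : d i₀ ≠ 0 := (Nat.pos_of_mem_divisors (hdiv i₀)).ne'
    have hdvd : ∀ i, d i ∣ a i := fun i => (Nat.mem_divisors.mp (hdiv i)).1
    have hcop : Nat.Coprime p (d i₀) := hp.coprime_iff_not_dvd.mpr hnd
    have hpda : p * d i₀ ∣ a i₀ := hcop.mul_dvd_of_dvd_of_dvd hpa (hdvd i₀)
    have hφd : ∀ i, i ≠ i₀ → φ d i = d i := fun i hi => Function.update_of_ne hi _ _
    have hφd0 : φ d i₀ = p * d i₀ := Function.update_self _ _ _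
    have hAA' : ∀ i, i ≠ i₀ → a i / d i = a i / φ d i := fun i hi => by rw [hφd i hi]
    have hApA' : a i₀ / d i₀ = p * (a i₀ / φ d i₀) := by
      rw [hφd0]
      obtain ⟨k, hk⟩ := hpda
      rw [hk, Nat.mul_div_cancel_left _ (Nat.mul_pos hp.pos (Nat.pos_of_ne_zero hd0))]
      calc p * d i₀ * k / d i₀ = d i₀ * (p * k) / d i₀ := by ring_nf
        _ = p * k := Nat.mul_div_cancel_left _ (Nat.pos_of_ne_zero hd0)
    have hA'0 : a i₀ / φ d i₀ ≠ 0 := by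
      rw [hφd0]; exact aux_div_ne_zero hpda (ha0 i₀)
    have hvpA' : (a i₀ / φ d i₀).factorization p = (a i₀).factorization p - 1 := by
      rw [hφd0, Nat.factorization_div hpda, Finsupp.tsub_apply,
        Nat.factorization_mul hp.pos.ne' hd0, Finsupp.add_apply, hp.factorization_self,
        Nat.factorization_eq_zero_of_not_dvd hnd]
    have hN'0 : (a i₀ / φ d i₀) * c i₀ ≠ 0 := mul_ne_zero hA'0 (hc0 i₀)
    have hκ' : (r i₀ / (χ i₀).conductor).factorization p
        ≤ ((a i₀ / φ d i₀) * c i₀).factorization p := by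
      rw [Nat.factorization_mul hA'0 (hc0 i₀), Finsupp.add_apply, hvpA']
      omega
    have hbr := aux_bracket m r χ i₀ p hp (fun i => a i / d i) (fun i => a i / φ d i) c
      hApA' hAA' hN'0 hκ'
    have hbr2 : wfunN m r χ (fun i => a i / d i) C
        = (starRingEnd ℂ) ((χ i₀).primitiveCharacter ((p : ZMod ((χ i₀).conductor)))) *
          wfunN m r χ (fun i => a i / φ d i) C := by
      show wfun m r χ _ C = _ * wfun m r χ _ C
      rw [hC]
      exact hbr
    -- the moebius product
    have hμ : (∏ i, (ArithmeticFunction.moebius (φ d i) : ℂ))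
        = -(∏ i, (ArithmeticFunction.moebius (d i) : ℂ)) := by
      have h1 : ∀ i, (ArithmeticFunction.moebius (φ d i) : ℂ)
          = Function.update (fun j => (ArithmeticFunction.moebius (d j) : ℂ)) i₀
              ((ArithmeticFunction.moebius (p * d i₀) : ℂ)) i := fun i =>
        Function.apply_update (fun j (x : ℕ) => ((ArithmeticFunction.moebius x : ℤ) : ℂ))
          d i₀ (p * d i₀) i
      rw [Finset.prod_congr rfl (fun i _ => h1 i),
        Finset.prod_update_of_mem (Finset.mem_univ i₀)]
      have h2 : ((ArithmeticFunction.moebius (p * d i₀) : ℤ) : ℂ)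
          = -((ArithmeticFunction.moebius (d i₀) : ℤ) : ℂ) := by
        rw [ArithmeticFunction.isMultiplicative_moebius.map_mul_of_coprime hcop,
          ArithmeticFunction.moebius_apply_prime hp]
        push_cast
        ring
      rw [h2, ← Finset.mul_prod_erase Finset.univ
        (fun j => ((ArithmeticFunction.moebius (d j) : ℤ) : ℂ)) (Finset.mem_univ i₀),
        Finset.erase_eq]
      ring
    -- the conjugate character product
    have hχst : (∏ i, (starRingEnd ℂ)
          ((χ i).primitiveCharacter ((φ d i : ZMod ((χ i).conductor)))))
        = (starRingEnd ℂ) ((χ i₀).primitiveCharacter ((p : ZMod ((χ i₀).conductor)))) *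
          ∏ i, (starRingEnd ℂ)
            ((χ i).primitiveCharacter ((d i : ZMod ((χ i).conductor)))) := by
      have h1 : ∀ i, (starRingEnd ℂ)
            ((χ i).primitiveCharacter ((φ d i : ZMod ((χ i).conductor))))
          = Function.update (fun j => (starRingEnd ℂ)
              ((χ j).primitiveCharacter ((d j : ZMod ((χ j).conductor))))) i₀
              ((starRingEnd ℂ)
                ((χ i₀).primitiveCharacter (((p * d i₀ : ℕ) : ZMod ((χ i₀).conductor))))) i :=
        fun i => Function.apply_update (fun j (x : ℕ) => (starRingEnd ℂ)
          ((χ j).primitiveCharacter ((x : ZMod ((χ j).conductor))))) d i₀ (p * d i₀) i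
      rw [Finset.prod_congr rfl (fun i _ => h1 i),
        Finset.prod_update_of_mem (Finset.mem_univ i₀)]
      have h2 : ((χ i₀).primitiveCharacter (((p * d i₀ : ℕ) : ZMod ((χ i₀).conductor))))
          = ((χ i₀).primitiveCharacter ((p : ZMod ((χ i₀).conductor)))) *
            ((χ i₀).primitiveCharacter ((d i₀ : ZMod ((χ i₀).conductor)))) := by
        rw [Nat.cast_mul, map_mul]
      rw [h2, map_mul, ← Finset.mul_prod_erase Finset.univ
        (fun j => (starRingEnd ℂ)
          ((χ j).primitiveCharacter ((d j : ZMod ((χ j).conductor))))) (Finset.mem_univ i₀),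
        Finset.erase_eq]
      ring
    show (∏ i, (ArithmeticFunction.moebius (d i) : ℂ)) *
        (∏ i, (starRingEnd ℂ)
          ((χ i).primitiveCharacter ((d i : ZMod ((χ i).conductor))))) *
        wfunN m r χ (fun i => a i / d i) C +
      (∏ i, (ArithmeticFunction.moebius (φ d i) : ℂ)) *
        (∏ i, (starRingEnd ℂ)
          ((χ i).primitiveCharacter ((φ d i : ZMod ((χ i).conductor))))) *
        wfunN m r χ (fun i => a i / φ d i) C = 0
    rw [hμ, hχst, hbr2]
    ring
  calc ∑ d ∈ D, T d = ∑ d ∈ Dsf, T d := hsplit1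
    _ = ∑ d ∈ Dsf.filter (fun d => ¬ p ∣ d i₀), T d
        + ∑ d ∈ Dsf.filter (fun d => p ∣ d i₀), T d := hsplit2
    _ = ∑ d ∈ Dsf.filter (fun d => ¬ p ∣ d i₀), T d
        + ∑ d ∈ Dsf.filter (fun d => ¬ p ∣ d i₀), T (φ d) := by rw [hbij]
    _ = ∑ d ∈ Dsf.filter (fun d => ¬ p ∣ d i₀), (T d + T (φ d)) := by
        rw [← Finset.sum_add_distrib]
    _ = 0 := Finset.sum_eq_zero hkey
end

section
/- For any u = (u₁,…,uₙ) ∈ ℝⁿ and any λ ∈ Λ ∩ [0,1)ⁿ, the identity Σ_{i=1}^n uᵢλᵢ = (1/2)( |H|·⟨h_u, S_λ⟩ + Σ_{i : λᵢ ≠ 0} uᵢ ) holds, where h_u ∈ L²(H) is defined by h_u(φ) = (Σ_{i : π_i = φ} uᵢ) − (Σ_{i : π_i = −φ} uᵢ) and S_λ ∈ L²(H) by S_λ(φ) = B₁(φ(λ + ℤⁿ)). -/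
/-- The `i`-th coordinate projection `Λ → ℝ/ℤ`, `x ↦ x i + ℤ`.  Homomorphisms
`Λ/ℤⁿ → ℝ/ℤ` are identified with homomorphisms `Λ → ℝ/ℤ` vanishing on integer
vectors. -/
noncomputable def coordHom (n : ℕ) (Λ : AddSubgroup (Fin n → ℝ)) (i : Fin n) :
    ↥Λ →+ AddCircle (1 : ℝ) :=
  (QuotientAddGroup.mk' (AddSubgroup.zmultiples (1 : ℝ))).comp
    ((Pi.evalAddMonoidHom (fun _ : Fin n => ℝ) i).comp Λ.subtype)


lemma fact_one_pos' : Fact ((0:ℝ) < 1) := ⟨one_pos⟩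
attribute [local instance] fact_one_pos'

lemma torsion_finite (N : ℕ) (hN : 0 < N) : {x : AddCircle (1:ℝ) | N • x = 0}.Finite := by
  have hsub : {x : AddCircle (1:ℝ) | N • x = 0} ⊆
      ⋃ d ∈ (N.divisors : Set ℕ), {x : AddCircle (1:ℝ) | addOrderOf x = d} := by
    intro x hx
    have h : addOrderOf x ∣ N := addOrderOf_dvd_iff_nsmul_eq_zero.2 hx
    exact Set.mem_biUnion (by exact_mod_cast Nat.mem_divisors.2 ⟨h, hN.ne'⟩) rfl
  exact (Set.Finite.biUnion (N.divisors).finite_toSet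
    (fun d hd => AddCircle.finite_setOfPred_addOrderOf_eq (p := (1:ℝ))
      (Nat.pos_of_mem_divisors (Finset.mem_coe.mp hd)))).subset hsub

variable {n : ℕ} {Λ : AddSubgroup (Fin n → ℝ)}

def intSub (n : ℕ) (Λ : AddSubgroup (Fin n → ℝ)) : AddSubgroup ↥Λ where
  carrier := {x : ↥Λ | ∀ i, ∃ k : ℤ, (x : Fin n → ℝ) i = (k : ℝ)}
  zero_mem' := fun i => ⟨0, by simp⟩
  add_mem' := by
    rintro a b ha hb i
    obtain ⟨k, hk⟩ := ha i; obtain ⟨m, hm⟩ := hb i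
    exact ⟨k + m, by push_cast; simp [hk, hm]⟩
  neg_mem' := by
    rintro a ha i
    obtain ⟨k, hk⟩ := ha i
    exact ⟨-k, by push_cast; simp [hk]⟩

lemma mem_intSub {x : ↥Λ} : x ∈ intSub n Λ ↔ ∀ i, ∃ k : ℤ, (x : Fin n → ℝ) i = (k : ℝ) :=
  Iff.rfl

lemma frac_mem (hZ : ∀ v : Fin n → ℤ, (fun i => (v i : ℝ)) ∈ Λ) (x : ↥Λ) :
    (fun i => Int.fract ((x : Fin n → ℝ) i)) ∈ Λ := by
  have h : (fun i => Int.fract ((x : Fin n → ℝ) i))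
      = (x : Fin n → ℝ) - (fun i => ((⌊(x : Fin n → ℝ) i⌋ : ℤ) : ℝ)) := by
    funext i; exact (Int.self_sub_floor _).symm
  rw [h]
  exact Λ.sub_mem x.2 (hZ _)

lemma finite_quot (hZ : ∀ v : Fin n → ℤ, (fun i => (v i : ℝ)) ∈ Λ)
    (hfin : {x : Fin n → ℝ | x ∈ Λ ∧ ∀ i, x i ∈ Set.Ico (0 : ℝ) 1}.Finite) :
    Finite (↥Λ ⧸ intSub n Λ) := by
  haveI := hfin.to_subtype
  apply Finite.of_surjective
    (fun c : {x : Fin n → ℝ | x ∈ Λ ∧ ∀ i, x i ∈ Set.Ico (0 : ℝ) 1} =>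
      (QuotientAddGroup.mk (⟨c.1, c.2.1⟩ : ↥Λ) : ↥Λ ⧸ intSub n Λ))
  intro q
  obtain ⟨x, rfl⟩ := QuotientAddGroup.mk_surjective q
  refine ⟨⟨fun i => Int.fract ((x : Fin n → ℝ) i), frac_mem hZ x,
    fun i => ⟨Int.fract_nonneg _, Int.fract_lt_one _⟩⟩, ?_⟩
  rw [QuotientAddGroup.eq]
  intro i
  refine ⟨⌊(x : Fin n → ℝ) i⌋, ?_⟩
  have : ((-(⟨fun i => Int.fract ((x : Fin n → ℝ) i), frac_mem hZ x⟩ : ↥Λ) + x : ↥Λ)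
      : Fin n → ℝ) i = -(Int.fract ((x : Fin n → ℝ) i)) + (x : Fin n → ℝ) i := by
    simp
  rw [this, neg_add_eq_sub, Int.self_sub_fract]

lemma finite_H (hZ : ∀ v : Fin n → ℤ, (fun i => (v i : ℝ)) ∈ Λ)
    (hfin : {x : Fin n → ℝ | x ∈ Λ ∧ ∀ i, x i ∈ Set.Ico (0 : ℝ) 1}.Finite) :
    Finite {φ : ↥Λ →+ AddCircle (1 : ℝ) //
      ∀ x : ↥Λ, (∀ i, ∃ k : ℤ, (x : Fin n → ℝ) i = (k : ℝ)) → φ x = 0} := by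
  haveI := finite_quot hZ hfin
  set N := Nat.card (↥Λ ⧸ intSub n Λ) with hNdef
  have hN : 0 < N := Nat.card_pos
  haveI hT : Finite {x : AddCircle (1:ℝ) | N • x = 0} := (torsion_finite N hN).to_subtype
  haveI := hfin.to_subtype
  haveI hC : Finite {x : ↥Λ | ∀ i, (x : Fin n → ℝ) i ∈ Set.Ico (0:ℝ) 1} :=
    Finite.of_injective
      (fun c : {x : ↥Λ | ∀ i, (x : Fin n → ℝ) i ∈ Set.Ico (0:ℝ) 1} =>
        (⟨c.1.1, c.1.2, c.2⟩ : {x : Fin n → ℝ | x ∈ Λ ∧ ∀ i, x i ∈ Set.Ico (0 : ℝ) 1}))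
      (by intro a b h
          simp only [Subtype.mk.injEq] at h
          exact Subtype.ext (Subtype.ext h))
  have hval : ∀ (φ : {φ : ↥Λ →+ AddCircle (1 : ℝ) //
        ∀ x : ↥Λ, (∀ i, ∃ k : ℤ, (x : Fin n → ℝ) i = (k : ℝ)) → φ x = 0})
      (c : ↥Λ), N • (φ.1 c) = 0 := by
    intro φ c
    rw [← map_nsmul]
    apply φ.2
    have h0 : ((N • c : ↥Λ) : ↥Λ ⧸ intSub n Λ) = 0 := by
      rw [QuotientAddGroup.mk_nsmul]
      exact card_nsmul_eq_zero'
    exact (QuotientAddGroup.eq_zero_iff _).mp h0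
  apply Finite.of_injective
    (fun φ : {φ : ↥Λ →+ AddCircle (1 : ℝ) //
        ∀ x : ↥Λ, (∀ i, ∃ k : ℤ, (x : Fin n → ℝ) i = (k : ℝ)) → φ x = 0} =>
      (fun c : {x : ↥Λ | ∀ i, (x : Fin n → ℝ) i ∈ Set.Ico (0:ℝ) 1} =>
        (⟨φ.1 c.1, hval φ c.1⟩ : {x : AddCircle (1:ℝ) | N • x = 0})))
  intro φ ψ h
  apply Subtype.ext
  ext x
  have hfr : ∀ (χ : {φ : ↥Λ →+ AddCircle (1 : ℝ) //
        ∀ x : ↥Λ, (∀ i, ∃ k : ℤ, (x : Fin n → ℝ) i = (k : ℝ)) → φ x = 0}),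
      χ.1 x = χ.1 ⟨fun i => Int.fract ((x : Fin n → ℝ) i), frac_mem hZ x⟩ := by
    intro χ
    have hd : χ.1 (x - ⟨fun i => Int.fract ((x : Fin n → ℝ) i), frac_mem hZ x⟩) = 0 := by
      apply χ.2
      intro i
      refine ⟨⌊(x : Fin n → ℝ) i⌋, ?_⟩
      show (x : Fin n → ℝ) i - Int.fract ((x : Fin n → ℝ) i) = _
      rw [Int.self_sub_fract]
    rw [map_sub, sub_eq_zero] at hd
    exact hd
  rw [hfr φ, hfr ψ]
  exact congrArg Subtype.val (congrFun h
    ⟨⟨fun i => Int.fract ((x : Fin n → ℝ) i), frac_mem hZ x⟩,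
      fun i => ⟨Int.fract_nonneg _, Int.fract_lt_one _⟩⟩)

lemma B1_coe_of_mem {x : ℝ} (hx : x ∈ Set.Ico (0:ℝ) 1) (hx0 : x ≠ 0) :
    B1 (x : AddCircle (1:ℝ)) = x - 1/2 := by
  have h1 : (x : AddCircle (1:ℝ)) ≠ 0 := by
    intro h
    exact hx0 ((AddCircle.coe_eq_zero_iff_of_mem_Ico hx).1 h)
  rw [B1, if_neg h1]
  rw [show ((x : AddCircle (1:ℝ))) = QuotientAddGroup.mk x from rfl,
    AddCircle.coe_equivIco_mk_apply]
  rw [div_one, mul_one, Int.fract_eq_self.2 ⟨hx.1, hx.2⟩]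

lemma B1_neg_coe {x : ℝ} (hx : x ∈ Set.Ico (0:ℝ) 1) :
    B1 ((-x : ℝ) : AddCircle (1:ℝ)) = - B1 (x : AddCircle (1:ℝ)) := by
  by_cases hx0 : x = 0
  · subst hx0; rw [neg_zero]; simp [B1]
  · have hne : ((-x : ℝ) : AddCircle (1:ℝ)) ≠ 0 := by
      intro h
      rw [AddCircle.coe_neg, neg_eq_zero] at h
      exact hx0 ((AddCircle.coe_eq_zero_iff_of_mem_Ico hx).1 h)
    rw [B1, if_neg hne,
      show (((-x : ℝ) : AddCircle (1:ℝ))) = QuotientAddGroup.mk (-x) from rfl,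
      AddCircle.coe_equivIco_mk_apply, B1_coe_of_mem hx hx0]
    have hfr : Int.fract x = x := Int.fract_eq_self.2 ⟨hx.1, hx.2⟩
    rw [div_one, mul_one, Int.fract_neg (by rw [hfr]; exact hx0), hfr]
    ring

open scoped Classical in
/-- Equation (5) (`eq:alternate_ulambda`).  For `u ∈ ℝⁿ` and `λ ∈ Λ ∩ [0,1)ⁿ`,
`Σᵢ uᵢ λᵢ = ½ (|H| ⟨h_u, S_λ⟩ + Σ_{i : λᵢ ≠ 0} uᵢ)`, where
`H = Hom(Λ/ℤⁿ, ℝ/ℤ)` (identified with the homomorphisms `Λ → ℝ/ℤ` vanishing on the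
integer vectors in `Λ`), `h_u(φ) = Σ_{i : π i = φ} uᵢ - Σ_{i : π i = -φ} uᵢ`,
`S_λ(φ) = B₁(φ(λ))`, and `⟨f, h⟩ = |H|⁻¹ Σ_{φ ∈ H} f(φ) conj (h(φ))`. -/
theorem sum_u_lambda_identity (n : ℕ) (Λ : AddSubgroup (Fin n → ℝ))
    (hZ : ∀ v : Fin n → ℤ, (fun i => (v i : ℝ)) ∈ Λ)
    (hfin : {x : Fin n → ℝ | x ∈ Λ ∧ ∀ i, x i ∈ Set.Ico (0 : ℝ) 1}.Finite)
    (u : Fin n → ℝ) (l : Fin n → ℝ) (hl : l ∈ Λ) (hl01 : ∀ i, l i ∈ Set.Ico (0 : ℝ) 1) :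
    ((∑ i, u i * l i : ℝ) : ℂ) =
      (1 / 2) *
        ((Nat.card {φ : ↥Λ →+ AddCircle (1 : ℝ) //
            ∀ x : ↥Λ, (∀ i, ∃ k : ℤ, (x : Fin n → ℝ) i = (k : ℝ)) → φ x = 0} : ℂ) *
          ((Nat.card {φ : ↥Λ →+ AddCircle (1 : ℝ) //
              ∀ x : ↥Λ, (∀ i, ∃ k : ℤ, (x : Fin n → ℝ) i = (k : ℝ)) → φ x = 0} : ℂ)⁻¹ *
            ∑ᶠ φ : {φ : ↥Λ →+ AddCircle (1 : ℝ) //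
                ∀ x : ↥Λ, (∀ i, ∃ k : ℤ, (x : Fin n → ℝ) i = (k : ℝ)) → φ x = 0},
              ((∑ i, if coordHom n Λ i = φ.1 then (u i : ℂ) else 0) -
                  (∑ i, if coordHom n Λ i = -φ.1 then (u i : ℂ) else 0)) *
                (starRingEnd ℂ) ((B1 (φ.1 ⟨l, hl⟩) : ℝ) : ℂ)) +
          ∑ i, if l i ≠ 0 then (u i : ℂ) else 0) := by

  haveI : Fact ((0:ℝ) < 1) := ⟨one_pos⟩
  haveI hHfin : Finite {φ : ↥Λ →+ AddCircle (1 : ℝ) //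
      ∀ x : ↥Λ, (∀ i, ∃ k : ℤ, (x : Fin n → ℝ) i = (k : ℝ)) → φ x = 0} := finite_H hZ hfin
  haveI : Nonempty {φ : ↥Λ →+ AddCircle (1 : ℝ) //
      ∀ x : ↥Λ, (∀ i, ∃ k : ℤ, (x : Fin n → ℝ) i = (k : ℝ)) → φ x = 0} :=
    ⟨⟨0, fun _ _ => rfl⟩⟩
  letI : Fintype {φ : ↥Λ →+ AddCircle (1 : ℝ) //
      ∀ x : ↥Λ, (∀ i, ∃ k : ℤ, (x : Fin n → ℝ) i = (k : ℝ)) → φ x = 0} := Fintype.ofFinite _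
  set H := {φ : ↥Λ →+ AddCircle (1 : ℝ) //
      ∀ x : ↥Λ, (∀ i, ∃ k : ℤ, (x : Fin n → ℝ) i = (k : ℝ)) → φ x = 0} with hHdef
  have hNne : ((Nat.card H : ℕ) : ℂ) ≠ 0 :=
    Nat.cast_ne_zero.mpr Nat.card_pos.ne'
  rw [finsum_eq_sum_of_fintype, ← mul_assoc, mul_inv_cancel₀ hNne, one_mul]
  have hpimem : ∀ i, ∀ x : ↥Λ, (∀ j, ∃ k : ℤ, (x : Fin n → ℝ) j = (k:ℝ)) →
      coordHom n Λ i x = 0 := by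
    intro i x hx
    obtain ⟨k, hk⟩ := hx i
    show QuotientAddGroup.mk' (AddSubgroup.zmultiples (1:ℝ)) ((x : Fin n → ℝ) i) = 0
    rw [QuotientAddGroup.mk'_apply, QuotientAddGroup.eq_zero_iff]
    exact AddSubgroup.mem_zmultiples_iff.2 ⟨k, by rw [hk]; simp⟩
  set pi : Fin n → H := fun i => ⟨coordHom n Λ i, hpimem i⟩ with hpidef
  set npi : Fin n → H := fun i =>
    ⟨-coordHom n Λ i, fun x hx => by
      rw [AddMonoidHom.neg_apply, hpimem i x hx, neg_zero]⟩ with hnpidef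
  have cond1 : ∀ (φ : H) (i : Fin n), (coordHom n Λ i = φ.1) = (pi i = φ) := by
    intro φ i
    exact propext ⟨fun h => Subtype.ext h, fun h => congrArg Subtype.val h⟩
  have cond2 : ∀ (φ : H) (i : Fin n), (coordHom n Λ i = -φ.1) = (npi i = φ) := by
    intro φ i
    apply propext
    constructor
    · intro h
      apply Subtype.ext
      show -coordHom n Λ i = φ.1
      rw [h, neg_neg]
    · intro h
      have h2 : -coordHom n Λ i = φ.1 := congrArg Subtype.val h
      rw [← h2, neg_neg]
  have hA : ∀ (w : Fin n → H),
      (∑ φ : H, ∑ i, if w i = φ then (u i : ℂ) * ((B1 (φ.1 ⟨l, hl⟩) : ℝ) : ℂ) else 0)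
        = ∑ i, (u i : ℂ) * ((B1 ((w i).1 ⟨l, hl⟩) : ℝ) : ℂ) := by
    intro w
    rw [Finset.sum_comm]
    refine Finset.sum_congr rfl fun i _ => ?_
    rw [Finset.sum_ite_eq]
    simp
  have hcoord : ∀ i, coordHom n Λ i ⟨l, hl⟩ = ((l i : ℝ) : AddCircle (1:ℝ)) := fun i => rfl
  have hnegval : ∀ i, ((B1 ((npi i).1 ⟨l, hl⟩) : ℝ) : ℂ)
      = -((B1 ((l i : ℝ) : AddCircle (1:ℝ)) : ℝ) : ℂ) := by
    intro i
    have h1 : (npi i).1 ⟨l, hl⟩ = ((-(l i) : ℝ) : AddCircle (1:ℝ)) := by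
      show -(coordHom n Λ i ⟨l, hl⟩) = _
      rw [hcoord i, ← AddCircle.coe_neg]
    rw [h1, B1_neg_coe (hl01 i)]
    push_cast
    ring
  have hbig : (∑ φ : H,
      ((∑ i, if coordHom n Λ i = φ.1 then (u i : ℂ) else 0) -
        (∑ i, if coordHom n Λ i = -φ.1 then (u i : ℂ) else 0)) *
        (starRingEnd ℂ) ((B1 (φ.1 ⟨l, hl⟩) : ℝ) : ℂ))
      = ∑ i, (u i : ℂ) * (2 * ((B1 ((l i : ℝ) : AddCircle (1:ℝ)) : ℝ) : ℂ)) := by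
    simp only [Complex.conj_ofReal, cond1, cond2, sub_mul, Finset.sum_mul, ite_mul, zero_mul]
    rw [Finset.sum_sub_distrib, hA pi, hA npi, ← Finset.sum_sub_distrib]
    refine Finset.sum_congr rfl fun i _ => ?_
    rw [hnegval i]
    have h2 : ((pi i).1 : ↥Λ →+ AddCircle (1:ℝ)) ⟨l, hl⟩ = ((l i : ℝ) : AddCircle (1:ℝ)) :=
      hcoord i
    rw [h2]
    ring
  rw [hbig, ← Finset.sum_add_distrib, Finset.mul_sum]
  push_cast
  refine Finset.sum_congr rfl fun i _ => ?_
  by_cases hli : l i = 0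
  · rw [hli]
    have h0 : ((0:ℝ) : AddCircle (1:ℝ)) = 0 := by norm_num
    rw [if_neg (by simp)]
    rw [h0]
    simp [B1]
  · rw [B1_coe_of_mem (hl01 i) hli, if_pos hli]
    push_cast
    ring
end
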